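/- Let α be the unique real root of x³ = x² + 1 (so 1.46 < α < 1.47). There exists a polynomial p such that every cobipartite graph of order n has at most p(n) · α^n minimal Roman dominating functions. -/

import Mathlib

/-- A Roman dominating function: every vertex with value 0 has a neighbor with value 2. -/
def IsRDF {V : Type*} (G : SimpleGraph V) (f : V → Fin 3) : Prop :=
  ∀ v, f v = 0 → ∃ u, G.Adj v u ∧ f u = 2

/-- A minimal Roman dominating function: an rdf such that no rdf `g ≠ f` satisfies `g ≤ f`. -/
def IsMinimalRDF {V : Type*} (G : SimpleGraph V) (f : V → Fin 3) : Prop :=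
  IsRDF G f ∧ ∀ g : V → Fin 3, IsRDF G g → g ≤ f → g = f

/-- The number of minimal Roman dominating functions of `G`. -/
noncomputable def numMinRDF {V : Type*} (G : SimpleGraph V) : ℕ :=
  {f : V → Fin 3 | IsMinimalRDF G f}.ncard

noncomputable def NbSet {V : Type} [Fintype V] (G : SimpleGraph V) (A : Finset V) :
    V → Finset V :=
  fun w => @Finset.filter _ (fun x => G.Adj w x ∧ x ∈ A)
    (fun _ => Classical.propDecidable _) Finset.univ

lemma mem_NbSet {V : Type} [Fintype V] (G : SimpleGraph V) (A : Finset V) (w x : V) :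
    x ∈ NbSet G A w ↔ G.Adj w x ∧ x ∈ A := by
  unfold NbSet
  constructor
  · intro h
    exact ((@Finset.mem_filter _ _ (fun _ => Classical.propDecidable _) _ _).1 h).2
  · intro h
    exact (@Finset.mem_filter _ _ (fun _ => Classical.propDecidable _) _ _).2
      ⟨Finset.mem_univ x, h⟩

open Finset

/-- The family of subsets `T ⊆ A` such that every element of `T` has a "private"
witness `w ∈ B` with `v ∈ Nb w` and `Nb w ∩ T = {v}`. -/
def PrivFam {γ : Type*} [DecidableEq γ] (A B : Finset γ) (Nb : γ → Finset γ) : Finset (Finset γ) :=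
  A.powerset.filter (fun T => ∀ v ∈ T, ∃ w ∈ B, v ∈ Nb w ∧ Nb w ∩ T = {v})

lemma mem_privFam {γ : Type*} [DecidableEq γ] {A B : Finset γ} {Nb : γ → Finset γ} {T : Finset γ} :
    T ∈ PrivFam A B Nb ↔ T ⊆ A ∧ ∀ v ∈ T, ∃ w ∈ B, v ∈ Nb w ∧ Nb w ∩ T = {v} := by
  unfold PrivFam
  rw [Finset.mem_filter, Finset.mem_powerset]

lemma privFam_card_le {γ : Type*} [DecidableEq γ] {α : ℝ} (hroot : α ^ 3 = α ^ 2 + 1)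
    (hα : 1.46 < α) :
    ∀ (n : ℕ) (A B : Finset γ) (Nb : γ → Finset γ), A.card + B.card ≤ n →
      ((PrivFam A B Nb).card : ℝ) ≤ α ^ (A.card + B.card) := by
  have hα1 : (1:ℝ) ≤ α := by linarith
  have hα2 : (2:ℝ) ≤ α ^ 2 := by nlinarith
  have hpow1 : ∀ m : ℕ, (1:ℝ) ≤ α ^ m := fun m => one_le_pow₀ hα1
  have hpow0 : ∀ m : ℕ, (0:ℝ) ≤ α ^ m := fun m => by positivity
  have hmono : ∀ {i j : ℕ}, i ≤ j → α ^ i ≤ α ^ j := fun h => pow_le_pow_right₀ hα1 h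
  have hkey : ∀ K e : ℕ, α ^ (K + e + 2) + α ^ K ≤ α ^ (K + e + 3) := by
    intro K e
    have h1 : α ^ K ≤ α ^ (K + e) := hmono (by omega)
    have h2 : α ^ (K + e + 3) = α ^ (K + e) * (α ^ 2 + 1) := by rw [← hroot]; ring
    have h3 : α ^ (K + e + 2) = α ^ (K + e) * α ^ 2 := by ring
    nlinarith [hpow0 (K + e)]
  have hempty : ∀ (B : Finset γ) (Nb : γ → Finset γ),
      ((PrivFam (∅ : Finset γ) B Nb).card : ℝ) ≤ 1 := by
    intro B Nb
    have hsub : PrivFam (∅ : Finset γ) B Nb ⊆ {∅} := by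
      intro T hT
      rw [mem_privFam] at hT
      exact Finset.mem_singleton.2 (Finset.subset_empty.1 hT.1)
    exact_mod_cast (Finset.card_le_card hsub).trans (by simp)
  intro n
  induction n with
  | zero =>
      intro A B Nb h
      have hA : A = ∅ := Finset.card_eq_zero.1 (by omega)
      subst hA
      exact (hempty B Nb).trans (hpow1 _)
  | succ n ih =>
      intro A B Nb h
      rcases Finset.eq_empty_or_nonempty A with rfl | ⟨v, hv⟩
      · exact (hempty B Nb).trans (hpow1 _)
      set k := (A.erase v).card with hkdef
      have hkA : k + 1 = A.card := Finset.card_erase_add_one hv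
      have hsplit : ((PrivFam A B Nb).card : ℝ) ≤
          (((PrivFam A B Nb).filter (fun T => v ∉ T)).card : ℝ) +
          (((PrivFam A B Nb).filter (fun T => v ∈ T)).card : ℝ) := by
        have hh := Finset.card_filter_add_card_filter_not
          (s := PrivFam A B Nb) (p := fun T => v ∉ T)
        simp only [not_not] at hh
        push_cast [← hh]
        linarith
      have himg : ∀ (s t : Finset (Finset γ)),
          (∀ T ∈ s, v ∈ T) → (∀ T ∈ s, T.erase v ∈ t) → s.card ≤ t.card := by
        intro s t hmem hmap
        apply Finset.card_le_card_of_injOn (fun T => T.erase v) (fun T hT => hmap T hT)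
        intro T hT T' hT' hEq
        have h1 : insert v (T.erase v) = T := Finset.insert_erase (hmem T hT)
        have h2 : insert v (T'.erase v) = T' := Finset.insert_erase (hmem T' hT')
        rw [← h1, ← h2]
        simp only [hEq]
      have hsub0 : (PrivFam A B Nb).filter (fun T => v ∉ T) ⊆ PrivFam (A.erase v) B Nb := by
        intro T hT
        rw [Finset.mem_filter, mem_privFam] at hT
        rw [mem_privFam]
        exact ⟨Finset.subset_erase.2 ⟨hT.1.1, hT.2⟩, hT.1.2⟩
      by_cases hB0 : ∀ w ∈ B, v ∉ Nb w
      · -- v can never be in T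
        have hsub : PrivFam A B Nb ⊆ PrivFam (A.erase v) B Nb := by
          intro T hT
          rw [mem_privFam] at hT ⊢
          have hvT : v ∉ T := fun hvT => by
            obtain ⟨w, hwB, hvw, _⟩ := hT.2 v hvT
            exact hB0 w hwB hvw
          exact ⟨Finset.subset_erase.2 ⟨hT.1, hvT⟩, hT.2⟩
        calc ((PrivFam A B Nb).card : ℝ)
            ≤ ((PrivFam (A.erase v) B Nb).card : ℝ) := by
              exact_mod_cast Finset.card_le_card hsub
          _ ≤ α ^ (k + B.card) := ih _ _ _ (by omega)
          _ ≤ α ^ (A.card + B.card) := hmono (by omega)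
      · push_neg at hB0
        obtain ⟨u, huB, hvu⟩ := hB0
        by_cases huniq : ∀ w ∈ B, v ∈ Nb w → w = u
        · -- the only possible private witness for v is u
          have hsubin : ∀ T ∈ (PrivFam A B Nb).filter (fun T => v ∈ T),
              T.erase v ∈ PrivFam (A \ Nb u) (B.erase u) Nb := by
            intro T hT
            rw [Finset.mem_filter, mem_privFam] at hT
            obtain ⟨⟨hTA, hval⟩, hvT⟩ := hT
            obtain ⟨w₀, hw₀B, hvw₀, hw₀T⟩ := hval v hvT
            have hw₀u : w₀ = u := huniq w₀ hw₀B hvw₀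
            subst hw₀u
            rw [mem_privFam]
            constructor
            · intro t ht
              obtain ⟨htv, htT⟩ := Finset.mem_erase.1 ht
              refine Finset.mem_sdiff.2 ⟨hTA htT, fun htu => htv ?_⟩
              have hmem : t ∈ Nb w₀ ∩ T := Finset.mem_inter.2 ⟨htu, htT⟩
              rw [hw₀T] at hmem
              exact Finset.mem_singleton.1 hmem
            · intro x hx
              obtain ⟨hxv, hxT⟩ := Finset.mem_erase.1 hx
              obtain ⟨w, hwB, hxw, hwT⟩ := hval x hxT
              have hwu : w ≠ w₀ := by
                rintro rfl
                rw [hwT] at hw₀T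
                exact hxv (Finset.singleton_injective hw₀T)
              have hvw : v ∉ Nb w := by
                intro hvw
                have hmem : v ∈ Nb w ∩ T := Finset.mem_inter.2 ⟨hvw, hvT⟩
                rw [hwT] at hmem
                exact hxv.symm (Finset.mem_singleton.1 hmem)
              refine ⟨w, Finset.mem_erase.2 ⟨hwu, hwB⟩, hxw, ?_⟩
              rw [Finset.inter_erase, hwT,
                Finset.erase_eq_of_notMem (by simp [Ne.symm hxv])]
          have hvAu : v ∈ A ∩ Nb u := Finset.mem_inter.2 ⟨hv, hvu⟩
          have hcard1 : (A \ Nb u).card + (A ∩ Nb u).card = A.card :=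
            Finset.card_sdiff_add_card_inter A (Nb u)
          have hbu : (B.erase u).card + 1 = B.card := Finset.card_erase_add_one huB
          have hc1 : (((PrivFam A B Nb).filter (fun T => v ∈ T)).card : ℝ)
              ≤ α ^ ((A \ Nb u).card + (B.erase u).card) := by
            have hle := himg _ _ (fun T hT => (Finset.mem_filter.1 hT).2) hsubin
            calc (((PrivFam A B Nb).filter (fun T => v ∈ T)).card : ℝ)
                ≤ ((PrivFam (A \ Nb u) (B.erase u) Nb).card : ℝ) := by exact_mod_cast hle
              _ ≤ _ := ih _ _ _ (by omega)
          by_cases hd : A ∩ Nb u ⊆ {v}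
          · -- degree one : both branches drop 2
            have hdeq : A ∩ Nb u = {v} :=
              Finset.Subset.antisymm hd (Finset.singleton_subset_iff.2 hvAu)
            have hsub0' : (PrivFam A B Nb).filter (fun T => v ∉ T) ⊆
                PrivFam (A.erase v) (B.erase u) Nb := by
              intro T hT
              have hvT : v ∉ T := (Finset.mem_filter.1 hT).2
              have hT' := hsub0 hT
              rw [mem_privFam] at hT' ⊢
              refine ⟨hT'.1, fun x hxT => ?_⟩
              obtain ⟨w, hwB, hxw, hwT⟩ := hT'.2 x hxT
              have hwu : w ≠ u := by
                rintro rfl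
                have hxA : x ∈ A := Finset.mem_of_mem_erase (hT'.1 hxT)
                have : x ∈ A ∩ Nb w := Finset.mem_inter.2 ⟨hxA, hxw⟩
                rw [hdeq] at this
                exact hvT (Finset.mem_singleton.1 this ▸ hxT)
              exact ⟨w, Finset.mem_erase.2 ⟨hwu, hwB⟩, hxw, hwT⟩
            have hc0 : (((PrivFam A B Nb).filter (fun T => v ∉ T)).card : ℝ)
                ≤ α ^ (k + (B.erase u).card) := by
              calc (((PrivFam A B Nb).filter (fun T => v ∉ T)).card : ℝ)
                  ≤ ((PrivFam (A.erase v) (B.erase u) Nb).card : ℝ) := by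
                    exact_mod_cast Finset.card_le_card hsub0'
                _ ≤ _ := ih _ _ _ (by omega)
            have hAu : (A \ Nb u).card = k := by
              have : (A ∩ Nb u).card = 1 := by rw [hdeq]; simp
              omega
            rw [hAu] at hc1
            have hfin : α ^ (k + (B.erase u).card) + α ^ (k + (B.erase u).card)
                ≤ α ^ (A.card + B.card) := by
              have he : A.card + B.card = (k + (B.erase u).card) + 2 := by omega
              have hexp : α ^ (A.card + B.card) = α ^ (k + (B.erase u).card) * α ^ 2 := by
                rw [he, pow_add]
              nlinarith [hpow0 (k + (B.erase u).card)]
            linarith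
          · -- degree at least two
            have hc0 : (((PrivFam A B Nb).filter (fun T => v ∉ T)).card : ℝ)
                ≤ α ^ (k + B.card) := by
              calc (((PrivFam A B Nb).filter (fun T => v ∉ T)).card : ℝ)
                  ≤ ((PrivFam (A.erase v) B Nb).card : ℝ) := by
                    exact_mod_cast Finset.card_le_card hsub0
                _ ≤ _ := ih _ _ _ (by omega)
            have hd2 : 2 ≤ (A ∩ Nb u).card := by
              obtain ⟨x, hxmem, hxv⟩ := Finset.not_subset.1 hd
              have : 1 < (A ∩ Nb u).card :=
                Finset.one_lt_card.2 ⟨x, hxmem, v, hvAu, fun hxveq => hxv (by simp [hxveq])⟩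
              omega
            -- exponent bookkeeping
            obtain ⟨K, hK⟩ : ∃ K, (A \ Nb u).card = K := ⟨_, rfl⟩
            obtain ⟨e, he⟩ : ∃ e, (A ∩ Nb u).card = e + 2 := ⟨(A ∩ Nb u).card - 2, by omega⟩
            have h1 : k + B.card = (K + (B.erase u).card) + e + 2 := by omega
            have h2 : A.card + B.card = (K + (B.erase u).card) + e + 3 := by omega
            rw [hK] at hc1
            rw [h2]
            calc ((PrivFam A B Nb).card : ℝ)
                ≤ α ^ (k + B.card) + α ^ (K + (B.erase u).card) := by linarith
              _ = α ^ ((K + (B.erase u).card) + e + 2) + α ^ (K + (B.erase u).card) := by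
                  rw [h1]
              _ ≤ _ := hkey _ _
        · -- two distinct private witnesses for v in B : drop (1, 3)
          push_neg at huniq
          obtain ⟨u', hu'B, hvu', hne'⟩ := huniq
          set Bv := B.filter (fun w => v ∈ Nb w) with hBvdef
          have hBvsub : Bv ⊆ B := Finset.filter_subset _ _
          have hsubin : ∀ T ∈ (PrivFam A B Nb).filter (fun T => v ∈ T),
              T.erase v ∈ PrivFam (A.erase v) (B \ Bv) Nb := by
            intro T hT
            rw [Finset.mem_filter, mem_privFam] at hT
            obtain ⟨⟨hTA, hval⟩, hvT⟩ := hT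
            rw [mem_privFam]
            refine ⟨Finset.erase_subset_erase v hTA, fun x hx => ?_⟩
            obtain ⟨hxv, hxT⟩ := Finset.mem_erase.1 hx
            obtain ⟨w, hwB, hxw, hwT⟩ := hval x hxT
            have hvw : v ∉ Nb w := by
              intro hvw
              have hmem : v ∈ Nb w ∩ T := Finset.mem_inter.2 ⟨hvw, hvT⟩
              rw [hwT] at hmem
              exact hxv.symm (Finset.mem_singleton.1 hmem)
            refine ⟨w, Finset.mem_sdiff.2 ⟨hwB, fun hwBv => hvw (Finset.mem_filter.1 hwBv).2⟩,
              hxw, ?_⟩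
            rw [Finset.inter_erase, hwT,
              Finset.erase_eq_of_notMem (by simp [Ne.symm hxv])]
          have hBv2 : 2 ≤ Bv.card := by
            have : 1 < Bv.card := Finset.one_lt_card.2
              ⟨u, Finset.mem_filter.2 ⟨huB, hvu⟩, u', Finset.mem_filter.2 ⟨hu'B, hvu'⟩,
                fun h => hne' h.symm⟩
            omega
          have hBsd : (B \ Bv).card + Bv.card = B.card := by
            have := Finset.card_sdiff_add_card_eq_card hBvsub
            omega
          have hc0 : (((PrivFam A B Nb).filter (fun T => v ∉ T)).card : ℝ)
              ≤ α ^ (k + B.card) := by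
            calc (((PrivFam A B Nb).filter (fun T => v ∉ T)).card : ℝ)
                ≤ ((PrivFam (A.erase v) B Nb).card : ℝ) := by
                  exact_mod_cast Finset.card_le_card hsub0
              _ ≤ _ := ih _ _ _ (by omega)
          have hc1 : (((PrivFam A B Nb).filter (fun T => v ∈ T)).card : ℝ)
              ≤ α ^ (k + (B \ Bv).card) := by
            have hle := himg _ _ (fun T hT => (Finset.mem_filter.1 hT).2) hsubin
            calc (((PrivFam A B Nb).filter (fun T => v ∈ T)).card : ℝ)
                ≤ ((PrivFam (A.erase v) (B \ Bv) Nb).card : ℝ) := by exact_mod_cast hle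
              _ ≤ _ := ih _ _ _ (by omega)
          obtain ⟨e, he⟩ : ∃ e, Bv.card = e + 2 := ⟨Bv.card - 2, by omega⟩
          have h1 : k + B.card = (k + (B \ Bv).card) + e + 2 := by omega
          have h2 : A.card + B.card = (k + (B \ Bv).card) + e + 3 := by omega
          rw [h2]
          calc ((PrivFam A B Nb).card : ℝ)
              ≤ α ^ (k + B.card) + α ^ (k + (B \ Bv).card) := by linarith
            _ = α ^ ((k + (B \ Bv).card) + e + 2) + α ^ (k + (B \ Bv).card) := by rw [h1]
            _ ≤ _ := hkey _ _
lemma fin3_cases : ∀ x : Fin 3, x = 0 ∨ x = 1 ∨ x = 2 := by decide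

lemma no_one_adj_two {V : Type*} {G : SimpleGraph V} {f : V → Fin 3}
    (hf : IsMinimalRDF G f) {v u : V} (h1 : f v = 1) (hadj : G.Adj v u) (h2 : f u = 2) :
    False := by
  classical
  have hgf : Function.update f v 0 ≤ f := by
    intro x
    by_cases hx : x = v
    · rw [hx, Function.update_self, h1]
      exact (by decide : (0:Fin 3) ≤ 1)
    · rw [Function.update_of_ne hx]
  have hgrdf : IsRDF G (Function.update f v 0) := by
    intro x hx
    by_cases hxv : x = v
    · refine ⟨u, hxv ▸ hadj, ?_⟩
      have huv : u ≠ v := by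
        intro h
        rw [h, h1] at h2
        exact absurd h2 (by decide)
      rw [Function.update_of_ne huv]
      exact h2
    · rw [Function.update_of_ne hxv] at hx
      obtain ⟨t, hadj', ht⟩ := hf.1 x hx
      have htv : t ≠ v := by
        rintro rfl
        rw [h1] at ht
        exact absurd ht (by decide)
      refine ⟨t, hadj', ?_⟩
      rw [Function.update_of_ne htv]
      exact ht
  have heq := hf.2 _ hgrdf hgf
  have hv' := congrFun heq v
  rw [Function.update_self, h1] at hv'
  exact absurd hv' (by decide)

lemma exists_private {V : Type*} {G : SimpleGraph V} {f : V → Fin 3}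
    (hf : IsMinimalRDF G f) {v : V} (hv : f v = 2) :
    ∃ w, G.Adj v w ∧ f w = 0 ∧ ∀ t, G.Adj w t → f t = 2 → t = v := by
  classical
  have hgf : Function.update f v 1 ≤ f := by
    intro x
    by_cases hx : x = v
    · rw [hx, Function.update_self, hv]
      exact (by decide : (1:Fin 3) ≤ 2)
    · rw [Function.update_of_ne hx]
  have hgne : Function.update f v 1 ≠ f := by
    intro h
    have hv' := congrFun h v
    rw [Function.update_self, hv] at hv'
    exact absurd hv' (by decide)
  have hnrdf : ¬ IsRDF G (Function.update f v 1) := fun hrdf => hgne (hf.2 _ hrdf hgf)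
  rw [IsRDF] at hnrdf
  push_neg at hnrdf
  obtain ⟨w, hw0, hwall⟩ := hnrdf
  have hwv : w ≠ v := by
    rintro rfl
    rw [Function.update_self] at hw0
    exact absurd hw0 (by decide)
  rw [Function.update_of_ne hwv] at hw0
  obtain ⟨t, hadj, ht⟩ := hf.1 w hw0
  have htv : t = v := by
    by_contra hne
    refine hwall t hadj ?_
    rw [Function.update_of_ne hne]
    exact ht
  subst htv
  refine ⟨w, hadj.symm, hw0, fun s hadj' hs => ?_⟩
  by_contra hne
  refine hwall s hadj' ?_
  rw [Function.update_of_ne hne]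
  exact hs

lemma eq_of_two_eq {V : Type*} {G : SimpleGraph V} {f g : V → Fin 3}
    (hf : IsMinimalRDF G f) (hg : IsMinimalRDF G g) (h : ∀ v, f v = 2 ↔ g v = 2) :
    f = g := by
  funext v
  rcases fin3_cases (f v) with h0 | h1 | h2
  · obtain ⟨u, hadj, hu2⟩ := hf.1 v h0
    have hgu : g u = 2 := (h u).1 hu2
    rcases fin3_cases (g v) with hg0 | hg1 | hg2
    · rw [h0, hg0]
    · exact absurd (no_one_adj_two hg hg1 hadj hgu) id
    · have h2' : f v = 2 := (h v).2 hg2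
      rw [h0] at h2'
      exact absurd h2' (by decide)
  · rcases fin3_cases (g v) with hg0 | hg1 | hg2
    · obtain ⟨u, hadj, hu2⟩ := hg.1 v hg0
      have hfu : f u = 2 := (h u).2 hu2
      exact absurd (no_one_adj_two hf h1 hadj hfu) id
    · rw [h1, hg1]
    · have h2' : f v = 2 := (h v).2 hg2
      rw [h1] at h2'
      exact absurd h2' (by decide)
  · rw [h2, ((h v).1 h2)]
lemma classify_aux {V : Type} [Fintype V] [DecidableEq V] {G : SimpleGraph V}
    {C₁ C₂ : Set V} (hun : ∀ x : V, x ∈ C₁ ∨ x ∈ C₂)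
    (hdisj : ∀ x : V, x ∈ C₁ → x ∈ C₂ → False)
    (hc1 : G.IsClique C₁) (hc2 : G.IsClique C₂)
    {f : V → Fin 3} (hf : IsMinimalRDF G f)
    {T A B : Finset V} (hT : ∀ x, x ∈ T ↔ f x = 2)
    (hA : ∀ x, x ∈ A ↔ x ∈ C₁) (hB : ∀ x, x ∈ B ↔ x ∈ C₂)
    (h2 : 2 ≤ (T ∩ A).card) :
    T ∈ PrivFam A B (NbSet G A) := by
  obtain ⟨v₁, hv₁, v₂, hv₂, hne⟩ := Finset.one_lt_card.1 (by omega : 1 < (T ∩ A).card)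
  have hv₁T : v₁ ∈ T := (Finset.mem_inter.1 hv₁).1
  have hv₁C : v₁ ∈ C₁ := (hA v₁).1 (Finset.mem_inter.1 hv₁).2
  have hv₂T : v₂ ∈ T := (Finset.mem_inter.1 hv₂).1
  have hv₂C : v₂ ∈ C₁ := (hA v₂).1 (Finset.mem_inter.1 hv₂).2
  have hpriv : ∀ x, x ∈ T → x ∈ C₁ →
      ∃ w, w ∈ C₂ ∧ G.Adj x w ∧ f w = 0 ∧ (∀ t, G.Adj w t → f t = 2 → t = x) := by
    intro x hxT hxC
    obtain ⟨w, hadj, hw0, huniq⟩ := exists_private hf ((hT x).1 hxT)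
    obtain ⟨y, hyT, hyC, hyx⟩ : ∃ y, y ∈ T ∧ y ∈ C₁ ∧ y ≠ x := by
      by_cases hx1 : x = v₁
      · exact ⟨v₂, hv₂T, hv₂C, by rw [hx1]; exact fun h => hne h.symm⟩
      · exact ⟨v₁, hv₁T, hv₁C, fun h => hx1 h.symm⟩
    have hwC₂ : w ∈ C₂ := by
      rcases hun w with hwC₁ | h
      · exfalso
        have hwy : w ≠ y := by
          intro h
          have h2' : f w = 2 := (hT w).1 (h ▸ hyT)
          rw [hw0] at h2'
          exact absurd h2' (by decide)
        have hadj' : G.Adj w y := hc1 hwC₁ hyC hwy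
        exact hyx (huniq y hadj' ((hT y).1 hyT))
      · exact h
    exact ⟨w, hwC₂, hadj, hw0, huniq⟩
  have hTC : ∀ x ∈ T, x ∈ C₁ := by
    intro t htT
    rcases hun t with h | htC₂
    · exact h
    exfalso
    obtain ⟨w, hwC₂, hadj, hw0, huniq⟩ := hpriv v₁ hv₁T hv₁C
    have hwt : w ≠ t := by
      intro h
      have h2' : f w = 2 := (hT w).1 (h ▸ htT)
      rw [hw0] at h2'
      exact absurd h2' (by decide)
    have hadj' : G.Adj w t := hc2 hwC₂ htC₂ hwt
    have htv : t = v₁ := huniq t hadj' ((hT t).1 htT)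
    exact hdisj v₁ hv₁C (htv ▸ htC₂)
  rw [mem_privFam]
  refine ⟨fun t ht => (hA t).2 (hTC t ht), fun x hxT => ?_⟩
  obtain ⟨w, hwC₂, hadj, hw0, huniq⟩ := hpriv x hxT (hTC x hxT)
  have hxNb : x ∈ NbSet G A w := (mem_NbSet G A w x).2 ⟨hadj.symm, (hA x).2 (hTC x hxT)⟩
  refine ⟨w, (hB w).2 hwC₂, hxNb, ?_⟩
  apply Finset.Subset.antisymm
  · intro y hy
    obtain ⟨hyN, hyT⟩ := Finset.mem_inter.1 hy
    obtain ⟨hadj'', hyA⟩ := (mem_NbSet G A w y).1 hyN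
    exact Finset.mem_singleton.2 (huniq y hadj'' ((hT y).1 hyT))
  · intro y hy
    rw [Finset.mem_singleton] at hy
    subst hy
    exact Finset.mem_inter.2 ⟨hxNb, hxT⟩
/-- Let `α` be the (unique) real root of `x³ = x² + 1` (with `1.46 < α < 1.47`). There is a
polynomial `p` such that every cobipartite graph of order `n` has at most `p(n) · αⁿ`
minimal Roman dominating functions. -/
theorem cobipartite_numMinRDF_upper (α : ℝ) (hroot : α ^ 3 = α ^ 2 + 1)
    (hlo : 1.46 < α) (hhi : α < 1.47) :
    ∃ p : Polynomial ℝ, ∀ (V : Type) [Fintype V] (G : SimpleGraph V),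
      (∃ C₁ C₂ : Set V, C₁ ∪ C₂ = Set.univ ∧ Disjoint C₁ C₂ ∧
        G.IsClique C₁ ∧ G.IsClique C₂) →
      (numMinRDF G : ℝ) ≤ p.eval (Fintype.card V : ℝ) * α ^ (Fintype.card V) := by
  classical
  refine ⟨Polynomial.X ^ 2 + Polynomial.C 2 * Polynomial.X + Polynomial.C 3, ?_⟩
  intro V _ G hcob
  obtain ⟨C₁, C₂, hun, hdisj, hc1, hc2⟩ := hcob
  have hunx : ∀ x : V, x ∈ C₁ ∨ x ∈ C₂ := fun x => by
    have hx : x ∈ C₁ ∪ C₂ := hun ▸ Set.mem_univ x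
    exact hx
  have hdisjx : ∀ x : V, x ∈ C₁ → x ∈ C₂ → False := fun x h1 h2 =>
    Set.disjoint_left.1 hdisj h1 h2
  set n := Fintype.card V with hn
  set C1f : Finset V := (Set.toFinite C₁).toFinset with hC1f
  set C2f : Finset V := (Set.toFinite C₂).toFinset with hC2f
  have hA : ∀ x, x ∈ C1f ↔ x ∈ C₁ := fun x => Set.Finite.mem_toFinset _
  have hB : ∀ x, x ∈ C2f ↔ x ∈ C₂ := fun x => Set.Finite.mem_toFinset _
  have hcards : C1f.card + C2f.card = n := by
    have hdisjf : Disjoint C1f C2f := by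
      rw [Finset.disjoint_left]
      intro x h1 h2
      exact hdisjx x ((hA x).1 h1) ((hB x).1 h2)
    have hunf : C1f ∪ C2f = Finset.univ := by
      ext x
      simp only [Finset.mem_union, Finset.mem_univ, iff_true]
      rcases hunx x with h | h
      · exact Or.inl ((hA x).2 h)
      · exact Or.inr ((hB x).2 h)
    rw [← Finset.card_union_of_disjoint hdisjf, hunf, Finset.card_univ]
  set M : Finset (V → Fin 3) := Finset.univ.filter (fun f => IsMinimalRDF G f) with hM
  have hMmem : ∀ f, f ∈ M ↔ IsMinimalRDF G f := fun f => by
    rw [hM, Finset.mem_filter]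
    simp
  have hnum : (numMinRDF G : ℝ) = (M.card : ℝ) := by
    have hset : {f : V → Fin 3 | IsMinimalRDF G f} = ↑M := by
      ext f
      simp only [Set.mem_setOf_eq, Finset.coe_filter, Finset.mem_coe]
      rw [hMmem f]
    rw [numMinRDF, hset, Set.ncard_coe_finset]
  set Φ : (V → Fin 3) → Finset V := fun f => Finset.univ.filter (fun v => f v = 2) with hΦ
  have hΦmem : ∀ f x, x ∈ Φ f ↔ f x = 2 := fun f x => by
    rw [hΦ]
    simp
  set S1 : Finset (Finset V) := insert ∅ (C1f.image fun x => {x}) with hS1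
  set S2 : Finset (Finset V) := insert ∅ (C2f.image fun x => {x}) with hS2
  set Small : Finset (Finset V) := (S1 ×ˢ S2).image (fun p => p.1 ∪ p.2) with hSmall
  set F1 : Finset (Finset V) := PrivFam C1f C2f (NbSet G C1f) with hF1
  set F2 : Finset (Finset V) := PrivFam C2f C1f (NbSet G C2f) with hF2
  have hmaps : ∀ f ∈ M, Φ f ∈ (Small ∪ F1) ∪ F2 := by
    intro f hfM
    have hf : IsMinimalRDF G f := (hMmem f).1 hfM
    by_cases h1 : 2 ≤ ((Φ f) ∩ C1f).card
    · exact Finset.mem_union_left _ (Finset.mem_union_right _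
        (classify_aux hunx hdisjx hc1 hc2 hf (hΦmem f) hA hB h1))
    by_cases h2 : 2 ≤ ((Φ f) ∩ C2f).card
    · exact Finset.mem_union_right _
        (classify_aux (fun x => (hunx x).symm) (fun x ha hb => hdisjx x hb ha)
          hc2 hc1 hf (hΦmem f) hB hA h2)
    · refine Finset.mem_union_left _ (Finset.mem_union_left _ ?_)
      have hSmem : ∀ (S Cf : Finset V), (S ∩ Cf).card ≤ 1 →
          S ∩ Cf ∈ insert ∅ (Cf.image fun x => ({x} : Finset V)) := by
        intro S Cf hle
        rcases Finset.eq_empty_or_nonempty (S ∩ Cf) with h | h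
        · rw [h]
          exact Finset.mem_insert_self _ _
        · have hone : (S ∩ Cf).card = 1 := le_antisymm hle (Finset.card_pos.2 h)
          obtain ⟨x, hx⟩ := Finset.card_eq_one.1 hone
          rw [hx]
          refine Finset.mem_insert_of_mem (Finset.mem_image.2 ⟨x, ?_, rfl⟩)
          have hx' : x ∈ S ∩ Cf := hx ▸ Finset.mem_singleton_self x
          exact (Finset.mem_inter.1 hx').2
      rw [hSmall, Finset.mem_image]
      refine ⟨(Φ f ∩ C1f, Φ f ∩ C2f), Finset.mem_product.2
        ⟨hSmem _ _ (by omega), hSmem _ _ (by omega)⟩, ?_⟩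
      ext y
      simp only [Finset.mem_union, Finset.mem_inter]
      constructor
      · rintro (⟨h, _⟩ | ⟨h, _⟩) <;> exact h
      · intro h
        rcases hunx y with hy | hy
        · exact Or.inl ⟨h, (hA y).2 hy⟩
        · exact Or.inr ⟨h, (hB y).2 hy⟩
  have hinj : Set.InjOn Φ ↑M := by
    intro f hfM g hgM hfg
    have hf := (hMmem f).1 (Finset.mem_coe.1 hfM)
    have hg := (hMmem g).1 (Finset.mem_coe.1 hgM)
    apply eq_of_two_eq hf hg
    intro v
    constructor
    · intro h
      exact (hΦmem g v).1 (hfg ▸ (hΦmem f v).2 h)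
    · intro h
      exact (hΦmem f v).1 (hfg ▸ (hΦmem g v).2 h)
  have hcardM : M.card ≤ ((Small ∪ F1) ∪ F2).card :=
    Finset.card_le_card_of_injOn Φ (fun f hf => hmaps f hf) hinj
  have hsum : (((Small ∪ F1) ∪ F2).card : ℝ) ≤
      (Small.card : ℝ) + (F1.card : ℝ) + (F2.card : ℝ) := by
    have h1 := Finset.card_union_le (Small ∪ F1) F2
    have h2 := Finset.card_union_le Small F1
    exact_mod_cast le_trans (Nat.cast_le.2 h1) (by exact_mod_cast Nat.add_le_add_right h2 _)
  have hS1card : S1.card ≤ C1f.card + 1 :=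
    le_trans (Finset.card_insert_le _ _) (Nat.add_le_add_right (Finset.card_image_le) 1)
  have hS2card : S2.card ≤ C2f.card + 1 :=
    le_trans (Finset.card_insert_le _ _) (Nat.add_le_add_right (Finset.card_image_le) 1)
  have hSmallcard : Small.card ≤ (n + 1) * (n + 1) := by
    calc Small.card ≤ (S1 ×ˢ S2).card := Finset.card_image_le
      _ = S1.card * S2.card := Finset.card_product _ _
      _ ≤ (C1f.card + 1) * (C2f.card + 1) := Nat.mul_le_mul hS1card hS2card
      _ ≤ (n + 1) * (n + 1) := Nat.mul_le_mul (by omega) (by omega)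
  have hF1card : (F1.card : ℝ) ≤ α ^ n := by
    have h := privFam_card_le hroot hlo (C1f.card + C2f.card) C1f C2f (NbSet G C1f) le_rfl
    rw [hcards] at h
    exact h
  have hF2card : (F2.card : ℝ) ≤ α ^ n := by
    have h := privFam_card_le hroot hlo (C2f.card + C1f.card) C2f C1f (NbSet G C2f) le_rfl
    have he : C2f.card + C1f.card = n := by omega
    rw [he] at h
    exact h
  have hpown : (1 : ℝ) ≤ α ^ n := one_le_pow₀ (by linarith)
  have hfinal : (numMinRDF G : ℝ) ≤ (((n : ℝ) + 1) ^ 2 + 2) * α ^ n := by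
    have hSm : (Small.card : ℝ) ≤ ((n : ℝ) + 1) ^ 2 := by
      have := hSmallcard
      have hc : ((Small.card : ℝ)) ≤ ((n + 1) * (n + 1) : ℕ) := by exact_mod_cast this
      calc (Small.card : ℝ) ≤ ((n + 1) * (n + 1) : ℕ) := hc
        _ = ((n : ℝ) + 1) ^ 2 := by push_cast; ring
    calc (numMinRDF G : ℝ) = (M.card : ℝ) := hnum
      _ ≤ (((Small ∪ F1) ∪ F2).card : ℝ) := by exact_mod_cast hcardM
      _ ≤ (Small.card : ℝ) + (F1.card : ℝ) + (F2.card : ℝ) := hsum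
      _ ≤ ((n : ℝ) + 1) ^ 2 + α ^ n + α ^ n := by linarith
      _ ≤ (((n : ℝ) + 1) ^ 2 + 2) * α ^ n := by nlinarith
  have heval : (Polynomial.X ^ 2 + Polynomial.C 2 * Polynomial.X + Polynomial.C 3 :
      Polynomial ℝ).eval (n : ℝ) = ((n : ℝ) + 1) ^ 2 + 2 := by
    simp only [Polynomial.eval_add, Polynomial.eval_mul, Polynomial.eval_pow,
      Polynomial.eval_X, Polynomial.eval_C]
    ring
  rw [heval]
  exact hfinal
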